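/- Let Φ = (G, φ) be a 2-connected non-geodetic T-gain graph, and let s, t be two distance-incompatible vertices whose distance d(s,t) is minimal among all distance-incompatible pairs. Then there exist two internally disjoint shortest paths from s to t with different gains. -/

import Mathlib

open Matrix
open scoped Classical

noncomputable section

namespace GG

variable {V : Type*}

/-- The gain of a walk: product of the gains of its oriented edges. -/
def walkGain {G : SimpleGraph V} (φ : V → V → ℂ) {u v : V} (p : G.Walk u v) : ℂ :=
  (p.darts.map (fun d => φ d.toProd.1 d.toProd.2)).prod

/-- `φ` is a `𝕋`-gain function on `G`: unit modulus on edges, inverse under reversal. -/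
def IsGain (G : SimpleGraph V) (φ : V → V → ℂ) : Prop :=
  (∀ i j, G.Adj i j → ‖φ i j‖ = 1) ∧ (∀ i j, G.Adj i j → φ j i = (φ i j)⁻¹)

/-- Adjacency matrix of a gain graph. -/
def gainAdj [Fintype V] [DecidableEq V] (G : SimpleGraph V) (φ : V → V → ℂ) :
    Matrix V V ℂ := fun i j => if G.Adj i j then φ i j else 0

/-- A gain graph is balanced if every cycle has gain 1. -/
def GBalanced (G : SimpleGraph V) (φ : V → V → ℂ) : Prop :=
  ∀ (u : V) (c : G.Walk u u), c.IsCycle → walkGain φ c = 1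

/-- All shortest paths between any pair of vertices have the same gain. -/
def DistCompatible (G : SimpleGraph V) (φ : V → V → ℂ) : Prop :=
  ∀ (s t : V) (p q : G.Walk s t), p.length = G.dist s t → q.length = G.dist s t →
    walkGain φ p = walkGain φ q

/-- The set of gains of shortest `s`-`t` paths. -/
def shortestGains (G : SimpleGraph V) (φ : V → V → ℂ) (s t : V) : Set ℂ :=
  {z | ∃ p : G.Walk s t, p.length = G.dist s t ∧ walkGain φ p = z}

/-- The element of `S` maximizing the real part, ties broken by maximal imaginary part
(correct for finite nonempty sets of gains). -/
def lexMaxGain (S : Set ℂ) : ℂ :=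
  ⟨sSup (Complex.re '' S), sSup (Complex.im '' {z ∈ S | z.re = sSup (Complex.re '' S)})⟩

/-- The element of `S` minimizing the real part, ties broken by minimal imaginary part. -/
def lexMinGain (S : Set ℂ) : ℂ :=
  ⟨sInf (Complex.re '' S), sInf (Complex.im '' {z ∈ S | z.re = sInf (Complex.re '' S)})⟩

/-- The maximum gain distance matrix `D^max_<(Φ)` with respect to a strict order `lt`. -/
def Dmax [Fintype V] [DecidableEq V] (G : SimpleGraph V) (φ : V → V → ℂ)
    (lt : V → V → Prop) : Matrix V V ℂ := fun s t =>
  if lt s t then lexMaxGain (shortestGains G φ s t) * (G.dist s t : ℂ)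
  else if lt t s then (starRingEnd ℂ) (lexMaxGain (shortestGains G φ t s)) * (G.dist s t : ℂ)
  else 0

/-- The minimum gain distance matrix `D^min_<(Φ)` with respect to a strict order `lt`. -/
def Dmin [Fintype V] [DecidableEq V] (G : SimpleGraph V) (φ : V → V → ℂ)
    (lt : V → V → Prop) : Matrix V V ℂ := fun s t =>
  if lt s t then lexMinGain (shortestGains G φ s t) * (G.dist s t : ℂ)
  else if lt t s then (starRingEnd ℂ) (lexMinGain (shortestGains G φ t s)) * (G.dist s t : ℂ)
  else 0

/-- Vertex order independence: the gain distance matrices agree for the standard order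
and its reverse. -/
def OrderIndependent [Fintype V] [DecidableEq V] [LinearOrder V] (G : SimpleGraph V)
    (φ : V → V → ℂ) : Prop :=
  Dmax G φ (· < ·) = Dmax G φ (fun a b => b < a) ∧
  Dmin G φ (· < ·) = Dmin G φ (fun a b => b < a)

/-- The largest (real) eigenvalue of a matrix. -/
def maxEig [Fintype V] [DecidableEq V] (A : Matrix V V ℂ) : ℝ :=
  sSup {r : ℝ | (r : ℂ) ∈ spectrum ℂ A}

/-- The spectral radius of a matrix. -/
def specRad [Fintype V] [DecidableEq V] (A : Matrix V V ℂ) : ℝ :=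
  sSup {r : ℝ | ∃ z ∈ spectrum ℂ A, ‖z‖ = r}

/-- The distance matrix of the underlying graph, as a complex matrix. -/
def distMatrix [Fintype V] [DecidableEq V] (G : SimpleGraph V) : Matrix V V ℂ :=
  fun i j => (G.dist i j : ℂ)

/-- Weighted gain adjacency matrix `A(Φ_w)`. -/
def wGainAdj [Fintype V] [DecidableEq V] (G : SimpleGraph V) (φ : V → V → ℂ)
    (w : V → V → ℝ) : Matrix V V ℂ := fun i j => if G.Adj i j then φ i j * (w i j : ℂ) else 0

/-- Weighted adjacency matrix `A(G_w)` of the underlying weighted graph. -/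
def wAdj [Fintype V] [DecidableEq V] (G : SimpleGraph V) (w : V → V → ℝ) :
    Matrix V V ℂ := fun i j => if G.Adj i j then (w i j : ℂ) else 0


/-- `G` is 2-connected: connected, at least 3 vertices, and no cut vertex. -/
def TwoConnected {V : Type*} [Fintype V] (G : SimpleGraph V) : Prop :=
  G.Connected ∧ 3 ≤ Fintype.card V ∧
    ∀ v : V, (G.induce ({v}ᶜ : Set V)).Connected

lemma walkGain_append {G : SimpleGraph V} (φ : V → V → ℂ) {u v w : V}
    (p : G.Walk u v) (q : G.Walk v w) :
    walkGain φ (p.append q) = walkGain φ p * walkGain φ q := by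
  simp [walkGain, SimpleGraph.Walk.darts_append]

lemma ne_head_of_mem_tail {G : SimpleGraph V} {s t x : V} {p : G.Walk s t} (hp : p.IsPath)
    (hx : x ∈ p.support.tail) : x ≠ s := by
  have hnd := hp.support_nodup
  rw [p.support_eq_cons, List.nodup_cons] at hnd
  exact fun h => hnd.1 (h ▸ hx)

lemma mem_internal {G : SimpleGraph V} {s t x : V} {p : G.Walk s t} (hp : p.IsPath)
    (hx : x ∈ p.support.tail.dropLast) : x ∈ p.support ∧ x ≠ s ∧ x ≠ t := by
  have hxt' : x ∈ p.support.tail := List.dropLast_subset _ hx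
  have hxs : x ∈ p.support := List.tail_subset _ hxt'
  refine ⟨hxs, ne_head_of_mem_tail hp hxt', ?_⟩
  have hxr : x ∈ p.reverse.support.tail := by
    rw [SimpleGraph.Walk.support_reverse, List.tail_reverse, List.mem_reverse]
    rw [p.support_eq_cons] at hx ⊢
    match h : p.support.tail, hx with
    | a :: l, hx => exact List.mem_cons_of_mem _ (h ▸ hx)
  exact ne_head_of_mem_tail (hp.reverse) hxr

/-- in a 2-connected non-geodetic gain graph, a distance-incompatible pair of
least distance is joined by two internally disjoint shortest paths of different gains. -/
theorem incompatible_pair_internally_disjoint {V : Type*} [Fintype V] [DecidableEq V]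
    (G : SimpleGraph V) (φ : V → V → ℂ) (hφ : IsGain G φ) (h2 : TwoConnected G)
    (hngeo : ∃ (s t : V) (p q : G.Walk s t),
      p.length = G.dist s t ∧ q.length = G.dist s t ∧ p ≠ q)
    (s t : V)
    (hinc : ∃ p q : G.Walk s t, p.length = G.dist s t ∧ q.length = G.dist s t ∧
      walkGain φ p ≠ walkGain φ q)
    (hmin : ∀ s' t' : V,
      (∃ p q : G.Walk s' t', p.length = G.dist s' t' ∧ q.length = G.dist s' t' ∧
        walkGain φ p ≠ walkGain φ q) → G.dist s t ≤ G.dist s' t') :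
    ∃ p q : G.Walk s t, p.length = G.dist s t ∧ q.length = G.dist s t ∧
      walkGain φ p ≠ walkGain φ q ∧
      List.Disjoint p.support.tail.dropLast q.support.tail.dropLast := by
  obtain ⟨p, q, hp, hq, hne⟩ := hinc
  refine ⟨p, q, hp, hq, hne, ?_⟩
  intro x hxp hxq
  have hconn : G.Connected := h2.1
  have hppath : p.IsPath := p.isPath_of_length_eq_dist hp
  have hqpath : q.IsPath := q.isPath_of_length_eq_dist hq
  obtain ⟨hxps, hxs, hxt⟩ := mem_internal hppath hxp
  obtain ⟨hxqs, -, -⟩ := mem_internal hqpath hxq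
  set p1 := p.takeUntil x hxps with hp1
  set p2 := p.dropUntil x hxps with hp2
  set q1 := q.takeUntil x hxqs with hq1
  set q2 := q.dropUntil x hxqs with hq2
  have hpsplit : p1.append p2 = p := p.take_spec hxps
  have hqsplit : q1.append q2 = q := q.take_spec hxqs
  have hplen : p1.length + p2.length = p.length := by
    rw [← hpsplit]; exact (SimpleGraph.Walk.length_append _ _).symm
  have hqlen : q1.length + q2.length = q.length := by
    rw [← hqsplit]; exact (SimpleGraph.Walk.length_append _ _).symm
  have d1 := SimpleGraph.dist_le p1
  have d2 := SimpleGraph.dist_le p2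
  have d3 := SimpleGraph.dist_le q1
  have d4 := SimpleGraph.dist_le q2
  have htri : G.dist s t ≤ G.dist s x + G.dist x t := hconn.dist_triangle
  have hpos1 : 0 < G.dist s x := hconn.pos_dist_of_ne (Ne.symm hxs)
  have hpos2 : 0 < G.dist x t := hconn.pos_dist_of_ne hxt
  have e1 : p1.length = G.dist s x := by omega
  have e2 : p2.length = G.dist x t := by omega
  have e3 : q1.length = G.dist s x := by omega
  have e4 : q2.length = G.dist x t := by omega
  have hgp : walkGain φ p = walkGain φ p1 * walkGain φ p2 := by
    rw [← hpsplit, walkGain_append]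
  have hgq : walkGain φ q = walkGain φ q1 * walkGain φ q2 := by
    rw [← hqsplit, walkGain_append]
  by_cases hg : walkGain φ p1 = walkGain φ q1
  · have hg2 : walkGain φ p2 ≠ walkGain φ q2 := by
      intro h; exact hne (by rw [hgp, hgq, hg, h])
    have := hmin x t ⟨p2, q2, e2, e4, hg2⟩
    omega
  · have := hmin s x ⟨p1, q1, e1, e3, hg⟩
    omega

end GG
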